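/- Let $0<\beta\le 1$. For every integer $k$, every integer $l\le k-2$, every locally integrable $f$, and every $x$ with $2^{k-1}<|x|\le 2^k$, the intrinsic square function satisfies the pointwise bound $S_\beta(f\chi_{D_l})(x) \le C\,|x|^{-n}\int_{D_l}|f(z)|\,dz$, where $D_l=\{2^{l-1}<|z|\le 2^l\}$ and $C$ depends only on $n$. -/

import Mathlib

open MeasureTheory Metric Set ENNReal NNReal Filter

noncomputable section

abbrev Rn (n : ℕ) := EuclideanSpace ℝ (Fin n)

/-- The dyadic annulus `D_l = {2^(l-1) < |z| ≤ 2^l}`. -/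
def annulus {n : ℕ} (l : ℤ) : Set (Rn n) :=
  {z | (2 : ℝ) ^ (l - 1) < ‖z‖ ∧ ‖z‖ ≤ (2 : ℝ) ^ l}

/-- The family `𝒞_β`: functions supported in the unit ball, with zero mean,
satisfying the `β`-Hölder condition with constant `1`. -/
def Cbeta (n : ℕ) (β : ℝ) : Set (Rn n → ℝ) :=
  {φ | (∀ x, φ x ≠ 0 → ‖x‖ ≤ 1) ∧ (∫ x, φ x) = 0 ∧
       ∀ x x', |φ x - φ x'| ≤ ‖x - x'‖ ^ β}

/-- The convolution `f * φ_t (y)` where `φ_t(y) = t⁻ⁿ φ(y/t)`. -/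
def convDil {n : ℕ} (f φ : Rn n → ℝ) (t : ℝ) (y : Rn n) : ℝ :=
  ∫ z, f z * (t ^ (-(n : ℝ)) * φ (t⁻¹ • (y - z)))

/-- The maximal function `A_β f(y,t) = sup_{φ ∈ 𝒞_β} |f * φ_t(y)|`. -/
def Abeta {n : ℕ} (β : ℝ) (f : Rn n → ℝ) (y : Rn n) (t : ℝ) : ℝ≥0∞ :=
  ⨆ (φ : Rn n → ℝ) (_ : φ ∈ Cbeta n β), ENNReal.ofReal |convDil f φ t y|

/-- The intrinsic square function `S_β`. -/
def Sbeta {n : ℕ} (β : ℝ) (f : Rn n → ℝ) (x : Rn n) : ℝ≥0∞ :=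
  (∫⁻ p : Rn n × ℝ in {p | 0 < p.2 ∧ dist x p.1 < p.2},
      (Abeta β f p.1 p.2) ^ 2 / ENNReal.ofReal (p.2 ^ ((n : ℝ) + 1))) ^ ((1 : ℝ) / 2)

/-- Functions in `𝒞_β` are bounded by `3`. -/
lemma phi_abs_le {n : ℕ} (hn : 0 < n) {β : ℝ} (hβ1 : β ≤ 1)
    {φ : Rn n → ℝ} (hφ : φ ∈ Cbeta n β) (u : Rn n) : |φ u| ≤ 3 := by
  obtain ⟨hsupp, -, hHol⟩ := hφ
  by_cases hu : ‖u‖ ≤ 1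
  · set e : Rn n := EuclideanSpace.single (⟨0, hn⟩ : Fin n) (3:ℝ) with he
    have hne : ‖e‖ = 3 := by
      rw [he, EuclideanSpace.norm_single]; norm_num
    have hv : φ (u + e) = 0 := by
      by_contra h
      have h1 := hsupp _ h
      have h2 : ‖e‖ ≤ ‖u + e‖ + ‖u‖ := by
        calc ‖e‖ = ‖(u + e) - u‖ := by rw [add_sub_cancel_left]
          _ ≤ ‖u + e‖ + ‖u‖ := norm_sub_le _ _
      rw [hne] at h2; linarith
    have h3 := hHol u (u + e)
    rw [hv, sub_zero] at h3
    have h4 : ‖u - (u + e)‖ = 3 := by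
      rw [show u - (u + e) = -e by abel, norm_neg, hne]
    rw [h4] at h3
    calc |φ u| ≤ (3:ℝ) ^ β := h3
      _ ≤ (3:ℝ) ^ (1:ℝ) := Real.rpow_le_rpow_of_exponent_le (by norm_num) hβ1
      _ = 3 := Real.rpow_one 3
  · have : φ u = 0 := by
      by_contra h; exact hu (hsupp u h)
    rw [this]; norm_num

lemma rpow_div_calc {t : ℝ} (ht : 0 < t) (n : ℕ) (c : ℝ) :
    (3 * t ^ (-(n:ℝ)) * c) ^ 2 / t ^ ((n:ℝ)+1) = 9 * c^2 * t ^ (-(3*(n:ℝ)+1)) := by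
  have h1 : (t ^ (-(n:ℝ))) ^ (2:ℕ) = t ^ ((-(n:ℝ))*2) := by
    rw [← Real.rpow_natCast (t ^ (-(n:ℝ))) 2, ← Real.rpow_mul ht.le]
    norm_num
  have h2 : t ^ ((-(n:ℝ))*2) / t ^ ((n:ℝ)+1) = t ^ (-(3*(n:ℝ)+1)) := by
    rw [← Real.rpow_sub ht]
    congr 1; ring
  calc (3 * t ^ (-(n:ℝ)) * c) ^ 2 / t ^ ((n:ℝ)+1)
      = 9 * c^2 * (t ^ ((-(n:ℝ))*2) / t ^ ((n:ℝ)+1)) := by rw [← h1]; ring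
    _ = 9 * c^2 * t ^ (-(3*(n:ℝ)+1)) := by rw [h2]

lemma Jcalc {n : ℕ} (hn : 0 < n) {R : ℝ} (hR : 0 < R) :
    ∫⁻ t in Ici R, ENNReal.ofReal (t ^ (-(2*(n:ℝ)+1)))
      = ENNReal.ofReal (R ^ (-(2*(n:ℝ))) / (2*(n:ℝ))) := by
  have hlt : -(2*(n:ℝ)+1) < -1 := by
    have : (1:ℝ) ≤ (n:ℝ) := by exact_mod_cast hn
    linarith
  rw [← Measure.restrict_congr_set Ioi_ae_eq_Ici]
  rw [← ofReal_integral_eq_lintegral_ofReal (integrableOn_Ioi_rpow_of_lt hlt hR) ?_]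
  · rw [integral_Ioi_rpow_of_lt hlt hR]
    congr 1
    have hne : -(2*(n:ℝ)+1) + 1 = -(2*(n:ℝ)) := by ring
    rw [hne]
    rw [div_eq_div_iff (by norm_num; exact_mod_cast hn.ne') (by positivity)]
    ring
  · filter_upwards [ae_restrict_mem measurableSet_Ioi] with t ht
    exact Real.rpow_nonneg (le_of_lt (hR.trans ht)) _

lemma annulus_measurableSet {n : ℕ} (l : ℤ) : MeasurableSet (annulus (n := n) l) := by
  have : annulus (n := n) l
      = {z : Rn n | (2:ℝ)^(l-1) < ‖z‖} ∩ {z : Rn n | ‖z‖ ≤ (2:ℝ)^l} := rfl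
  rw [this]
  exact (measurableSet_lt measurable_const measurable_norm).inter
    (measurableSet_le measurable_norm measurable_const)

lemma endgame_real {n : ℕ} (hn : 0 < n) {a b : ℝ} (ha : 0 ≤ a) (hb : 0 < b) :
    (9 * a^2 * ((b/4) ^ (-(2*(n:ℝ))) / (2*(n:ℝ)))) ^ ((1:ℝ)/2)
      = (9/(2*(n:ℝ)))^((1:ℝ)/2) * (4:ℝ)^(n:ℕ) * (b ^ (-(n:ℝ)) * a) := by
  have hn' : (0:ℝ) < (n:ℝ) := by exact_mod_cast hn
  have hb4 : (0:ℝ) < b/4 := by positivity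
  have harg : 9 * a^2 * ((b/4) ^ (-(2*(n:ℝ))) / (2*(n:ℝ)))
      = (9/(2*(n:ℝ))) * (a^2 * (b/4) ^ (-(2*(n:ℝ)))) := by ring
  rw [harg]
  rw [Real.mul_rpow (by positivity) (by positivity)]
  rw [Real.mul_rpow (by positivity) (by positivity)]
  have h1 : (a^2 : ℝ) ^ ((1:ℝ)/2) = a := by
    rw [← Real.rpow_natCast a 2, ← Real.rpow_mul ha]
    norm_num
  have h2 : ((b/4) ^ (-(2*(n:ℝ)))) ^ ((1:ℝ)/2) = (b/4) ^ (-(n:ℝ)) := by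
    rw [← Real.rpow_mul hb4.le]
    congr 1; ring
  have h3 : (b/4 : ℝ) ^ (-(n:ℝ)) = b ^ (-(n:ℝ)) * 4 ^ (n:ℕ) := by
    rw [Real.div_rpow hb.le (by norm_num : (0:ℝ) ≤ 4), Real.rpow_neg (by norm_num : (0:ℝ) ≤ 4),
      div_eq_mul_inv, inv_inv, ← Real.rpow_natCast (4:ℝ) n]
  rw [h1, h2, h3]
  ring

theorem intrinsic_square_pointwise_bound_inner
    (n : ℕ) (hn : 0 < n) (β : ℝ) (hβ0 : 0 < β) (hβ1 : β ≤ 1) :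
    ∃ C : ℝ, 0 < C ∧
      ∀ (k l : ℤ), l ≤ k - 2 →
      ∀ f : Rn n → ℝ, LocallyIntegrable f volume →
      ∀ x : Rn n, (2 : ℝ) ^ (k - 1) < ‖x‖ → ‖x‖ ≤ (2 : ℝ) ^ k →
        Sbeta β ((annulus l).indicator f) x
          ≤ ENNReal.ofReal C * ENNReal.ofReal (‖x‖ ^ (-(n : ℝ))) *
              ∫⁻ z in annulus (n := n) l, (‖f z‖₊ : ℝ≥0∞) := by
  haveI : Nonempty (Fin n) := ⟨⟨0, hn⟩⟩
  haveI : Nontrivial (Rn n) := by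
    refine ⟨0, EuclideanSpace.single (⟨0, hn⟩ : Fin n) (1:ℝ), fun h => ?_⟩
    have := congrArg norm h
    rw [norm_zero, EuclideanSpace.norm_single] at this
    norm_num at this
  set c₁ : ℝ≥0∞ := volume (ball (0 : Rn n) 1) with hc₁
  set K : ℝ≥0∞ := c₁ ^ ((1:ℝ)/2)
      * ENNReal.ofReal ((9 / (2*(n:ℝ)))^((1:ℝ)/2) * 4 ^ (n:ℕ)) with hK
  have hKtop : K ≠ ∞ := by
    apply ENNReal.mul_ne_top _ ofReal_ne_top
    exact (ENNReal.rpow_lt_top_of_nonneg (by norm_num) measure_ball_lt_top.ne).ne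
  refine ⟨K.toReal + 1, by positivity, ?_⟩
  intro k l hl f hf x hx1 hx2
  have hxpos : 0 < ‖x‖ := lt_trans (zpow_pos (by norm_num) _) hx1
  set R : ℝ := ‖x‖ / 4 with hRdef
  have hR : 0 < R := by positivity
  -- integrability of f on the annulus
  have hsub : annulus (n := n) l ⊆ closedBall (0 : Rn n) ((2:ℝ)^l) := by
    intro z hz
    rw [mem_closedBall, dist_zero_right]
    exact hz.2
  have hIntOn : IntegrableOn f (annulus (n := n) l) volume :=
    (hf.integrableOn_isCompact (isCompact_closedBall _ _)).mono_set hsub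
  set Ir : ℝ := ∫ z in annulus (n := n) l, ‖f z‖ with hIrdef
  have hIr0 : 0 ≤ Ir := integral_nonneg fun z => norm_nonneg _
  have hIrI : ENNReal.ofReal Ir = ∫⁻ z in annulus (n := n) l, (‖f z‖₊ : ℝ≥0∞) :=
    ofReal_integral_norm_eq_lintegral_enorm hIntOn
  -- geometry : the annulus is deep inside the ball of radius `‖x‖/2`
  have h2l : (2:ℝ)^l < ‖x‖ / 2 := by
    have ha : (2:ℝ)^l ≤ (2:ℝ)^(k-2) := by
      apply zpow_le_zpow_right₀ (by norm_num) hl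
    have hb : (2:ℝ)^(k-2) = (2:ℝ)^(k-1) / 2 := by
      rw [show k - 2 = (k-1) - 1 by ring, zpow_sub_one₀ (by norm_num : (2:ℝ) ≠ 0)]
      ring
    rw [hb] at ha
    linarith
  -- the universal convolution bound
  have hconv_le : ∀ (φ : Rn n → ℝ), φ ∈ Cbeta n β → ∀ (t : ℝ), 0 < t → ∀ y : Rn n,
      |convDil ((annulus l).indicator f) φ t y| ≤ 3 * t ^ (-(n:ℝ)) * Ir := by
    intro φ hφ t ht y
    have htn : 0 < t ^ (-(n:ℝ)) := Real.rpow_pos_of_pos ht _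
    have hg : Integrable ((annulus (n := n) l).indicator
        fun z => 3 * t ^ (-(n:ℝ)) * ‖f z‖) volume :=
      (integrable_indicator_iff (annulus_measurableSet l)).2
        ((hIntOn.norm).const_mul (3 * t ^ (-(n:ℝ))))
    have hbound : ∀ z : Rn n,
        ‖(annulus l).indicator f z * (t ^ (-(n:ℝ)) * φ (t⁻¹ • (y - z)))‖
          ≤ (annulus (n := n) l).indicator (fun z => 3 * t ^ (-(n:ℝ)) * ‖f z‖) z := by
      intro z
      by_cases hz : z ∈ annulus (n := n) l
      · rw [indicator_of_mem hz, indicator_of_mem hz, norm_mul]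
        have h1 : ‖t ^ (-(n:ℝ)) * φ (t⁻¹ • (y - z))‖ ≤ t ^ (-(n:ℝ)) * 3 := by
          rw [norm_mul, Real.norm_eq_abs, Real.norm_eq_abs, abs_of_pos htn]
          exact mul_le_mul_of_nonneg_left (phi_abs_le hn hβ1 hφ _) htn.le
        calc ‖f z‖ * ‖t ^ (-(n:ℝ)) * φ (t⁻¹ • (y - z))‖
            ≤ ‖f z‖ * (t ^ (-(n:ℝ)) * 3) := mul_le_mul_of_nonneg_left h1 (norm_nonneg _)
          _ = 3 * t ^ (-(n:ℝ)) * ‖f z‖ := by ring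
      · rw [indicator_of_notMem hz, indicator_of_notMem hz, zero_mul, norm_zero]
    have h2 := norm_integral_le_of_norm_le hg (Eventually.of_forall hbound)
    rw [Real.norm_eq_abs] at h2
    refine h2.trans (le_of_eq ?_)
    rw [integral_indicator (annulus_measurableSet l), integral_const_mul]
  -- vanishing of the convolution far from the annulus
  have hconv_zero : ∀ (φ : Rn n → ℝ), φ ∈ Cbeta n β → ∀ (t : ℝ), 0 < t → ∀ y : Rn n,
      (∀ z ∈ annulus (n := n) l, t < ‖y - z‖) →
      convDil ((annulus l).indicator f) φ t y = 0 := by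
    intro φ hφ t ht y hfar
    have hz0 : ∀ z : Rn n,
        (annulus l).indicator f z * (t ^ (-(n:ℝ)) * φ (t⁻¹ • (y - z))) = 0 := by
      intro z
      by_cases hz : z ∈ annulus (n := n) l
      · have hφ0 : φ (t⁻¹ • (y - z)) = 0 := by
          by_contra h
          have h1 := hφ.1 _ h
          rw [norm_smul, norm_inv, Real.norm_eq_abs, abs_of_pos ht,
            inv_mul_le_iff₀ ht, mul_one] at h1
          exact absurd h1 (not_le.2 (hfar z hz))
        rw [hφ0, mul_zero, mul_zero]
      · rw [indicator_of_notMem hz, zero_mul]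
    have heq : (fun z : Rn n =>
        (annulus l).indicator f z * (t ^ (-(n:ℝ)) * φ (t⁻¹ • (y - z)))) = fun _ => (0:ℝ) :=
      funext hz0
    unfold convDil
    rw [heq, integral_zero]
  -- bounds on Abeta
  have hA_le : ∀ (y : Rn n) (t : ℝ), 0 < t →
      Abeta β ((annulus l).indicator f) y t ≤ ENNReal.ofReal (3 * t ^ (-(n:ℝ)) * Ir) := by
    intro y t ht
    exact iSup₂_le fun φ hφ => ENNReal.ofReal_le_ofReal (hconv_le φ hφ t ht y)
  have hA_zero : ∀ (y : Rn n) (t : ℝ), 0 < t → t < R → dist x y < t →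
      Abeta β ((annulus l).indicator f) y t = 0 := by
    intro y t ht htR hxy
    have hfar : ∀ z ∈ annulus (n := n) l, t < ‖y - z‖ := by
      intro z hz
      by_contra h
      push_neg at h
      have hz2 : ‖z‖ ≤ (2:ℝ)^l := hz.2
      have hx3 : ‖x‖ ≤ ‖x - y‖ + ‖y - z‖ + ‖z‖ := by
        calc ‖x‖ = ‖(x - y) + (y - z) + z‖ := by congr 1; abel
          _ ≤ ‖x - y‖ + ‖y - z‖ + ‖z‖ := norm_add₃_le
      rw [dist_eq_norm] at hxy
      rw [hRdef] at htR
      linarith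
    refine le_antisymm (iSup₂_le fun φ hφ => ?_) zero_le
    rw [hconv_zero φ hφ t ht y hfar, abs_zero, ENNReal.ofReal_zero]
  -- the comparison function
  set T : Set (Rn n × ℝ) := {p | R ≤ p.2 ∧ dist x p.1 < p.2} with hT
  have hTmeas : MeasurableSet T :=
    (measurableSet_le measurable_const measurable_snd).inter
      (measurableSet_lt (measurable_const.dist measurable_fst) measurable_snd)
  set H : Rn n × ℝ → ℝ≥0∞ :=
    T.indicator (fun p => ENNReal.ofReal (9 * Ir^2 * p.2 ^ (-(3*(n:ℝ)+1)))) with hH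
  have hHmeas : Measurable H :=
    (ENNReal.measurable_ofReal.comp
      (measurable_const.mul (measurable_snd.pow measurable_const))).indicator hTmeas
  have hSmeas : MeasurableSet {p : Rn n × ℝ | 0 < p.2 ∧ dist x p.1 < p.2} :=
    (measurableSet_lt measurable_const measurable_snd).inter
      (measurableSet_lt (measurable_const.dist measurable_fst) measurable_snd)
  -- step 1 : pointwise domination on the cone
  have step1 : ∫⁻ p : Rn n × ℝ in {p | 0 < p.2 ∧ dist x p.1 < p.2},
      (Abeta β ((annulus l).indicator f) p.1 p.2) ^ 2
        / ENNReal.ofReal (p.2 ^ ((n : ℝ) + 1))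
      ≤ ∫⁻ p : Rn n × ℝ, H p := by
    refine le_trans ?_ (setLIntegral_le_lintegral {p : Rn n × ℝ | 0 < p.2 ∧ dist x p.1 < p.2} H)
    refine lintegral_mono_ae ?_
    rw [ae_restrict_iff' hSmeas]
    refine Eventually.of_forall fun p hp => ?_
    obtain ⟨hpt, hpd⟩ := hp
    by_cases hRt : R ≤ p.2
    · have h1 := hA_le p.1 p.2 hpt
      have hHp : H p = ENNReal.ofReal (3 * p.2 ^ (-(n:ℝ)) * Ir) ^ 2
          / ENNReal.ofReal (p.2 ^ ((n:ℝ)+1)) := by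
        rw [hH, indicator_of_mem (show p ∈ T from ⟨hRt, hpd⟩)]
        have hnn : 0 ≤ 3 * p.2 ^ (-(n:ℝ)) * Ir :=
          mul_nonneg (mul_nonneg (by norm_num) (Real.rpow_nonneg hpt.le _)) hIr0
        rw [← ENNReal.ofReal_pow hnn,
          ← ENNReal.ofReal_div_of_pos (Real.rpow_pos_of_pos hpt _),
          rpow_div_calc hpt n Ir]
      rw [hHp]
      exact ENNReal.div_le_div_right (pow_le_pow_left' h1 2) _
    · rw [hA_zero p.1 p.2 hpt (lt_of_not_ge hRt) hpd]
      simp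
  -- step 2 : compute the comparison integral
  have hinner : ∀ t : ℝ, (∫⁻ y : Rn n, H (y, t))
      = (Ici R).indicator (fun s => ENNReal.ofReal (9 * Ir^2 * s ^ (-(3*(n:ℝ)+1)))
          * volume (ball x s)) t := by
    intro t
    by_cases hRt : R ≤ t
    · have hy : ∀ y : Rn n, H (y, t)
          = (ball x t).indicator
              (fun _ => ENNReal.ofReal (9 * Ir^2 * t ^ (-(3*(n:ℝ)+1)))) y := by
        intro y
        by_cases hd : dist x y < t
        · rw [hH, indicator_of_mem (show (y, t) ∈ T from ⟨hRt, hd⟩),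
            indicator_of_mem (mem_ball'.2 hd)]
        · rw [hH, indicator_of_notMem (show (y, t) ∉ T from fun h => hd h.2),
            indicator_of_notMem (fun h => hd (mem_ball'.1 h))]
      rw [lintegral_congr hy, lintegral_indicator measurableSet_ball,
        setLIntegral_const, indicator_of_mem (show t ∈ Ici R from hRt)]
    · have hy : ∀ y : Rn n, H (y, t) = 0 := by
        intro y
        rw [hH, indicator_of_notMem (show (y, t) ∉ T from fun h => hRt h.1)]
      rw [lintegral_congr hy, lintegral_zero,
        indicator_of_notMem (show t ∉ Ici R from hRt)]
  have step2 : ∫⁻ p : Rn n × ℝ, H p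
      = c₁ * ENNReal.ofReal (9 * Ir^2) * ENNReal.ofReal (R ^ (-(2*(n:ℝ))) / (2*(n:ℝ))) := by
    rw [Measure.volume_eq_prod, lintegral_prod_symm' H hHmeas]
    have hc₁top : c₁ * ENNReal.ofReal (9 * Ir^2) ≠ ∞ :=
      ENNReal.mul_ne_top measure_ball_lt_top.ne ofReal_ne_top
    calc ∫⁻ t : ℝ, ∫⁻ y : Rn n, H (y, t)
        = ∫⁻ t : ℝ, (Ici R).indicator
            (fun s => ENNReal.ofReal (9 * Ir^2 * s ^ (-(3*(n:ℝ)+1)))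
              * volume (ball x s)) t := lintegral_congr hinner
      _ = ∫⁻ t in Ici R, ENNReal.ofReal (9 * Ir^2 * t ^ (-(3*(n:ℝ)+1)))
            * volume (ball x t) := lintegral_indicator measurableSet_Ici _
      _ = ∫⁻ t in Ici R, (c₁ * ENNReal.ofReal (9 * Ir^2))
            * ENNReal.ofReal (t ^ (-(2*(n:ℝ)+1))) := by
          refine setLIntegral_congr_fun measurableSet_Ici ?_
          intro t ht
          have ht0 : 0 < t := lt_of_lt_of_le hR ht
          beta_reduce
          rw [Measure.addHaar_ball volume x ht0.le, finrank_euclideanSpace_fin, ← hc₁,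
            ← Real.rpow_natCast t n, ← mul_assoc,
            ← ENNReal.ofReal_mul (mul_nonneg (by positivity) (Real.rpow_nonneg ht0.le _))]
          have hexp : 9 * Ir^2 * t ^ (-(3*(n:ℝ)+1)) * t ^ ((n:ℝ))
              = 9 * Ir^2 * t ^ (-(2*(n:ℝ)+1)) := by
            have he : -(3*(n:ℝ)+1) + (n:ℝ) = -(2*(n:ℝ)+1) := by ring
            rw [mul_assoc, ← Real.rpow_add ht0, he]
          rw [hexp, ENNReal.ofReal_mul (by positivity : (0:ℝ) ≤ 9 * Ir^2)]
          ring
      _ = (c₁ * ENNReal.ofReal (9 * Ir^2))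
            * ∫⁻ t in Ici R, ENNReal.ofReal (t ^ (-(2*(n:ℝ)+1))) :=
          lintegral_const_mul' _ _ hc₁top
      _ = c₁ * ENNReal.ofReal (9 * Ir^2)
            * ENNReal.ofReal (R ^ (-(2*(n:ℝ))) / (2*(n:ℝ))) := by rw [Jcalc hn hR]
  -- put everything together
  have htot : Sbeta β ((annulus l).indicator f) x
      ≤ (c₁ * ENNReal.ofReal (9 * Ir^2 * (R ^ (-(2*(n:ℝ))) / (2*(n:ℝ))))) ^ ((1:ℝ)/2) := by
    unfold Sbeta
    refine ENNReal.rpow_le_rpow ?_ (by norm_num)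
    refine (step1.trans step2.le).trans (le_of_eq ?_)
    rw [mul_assoc, ← ENNReal.ofReal_mul (by positivity : (0:ℝ) ≤ 9 * Ir^2)]
  have hB : (c₁ * ENNReal.ofReal (9 * Ir^2 * (R ^ (-(2*(n:ℝ))) / (2*(n:ℝ))))) ^ ((1:ℝ)/2)
      = K * ENNReal.ofReal (‖x‖ ^ (-(n:ℝ))) * ENNReal.ofReal Ir := by
    rw [ENNReal.mul_rpow_of_nonneg _ _ (by norm_num : (0:ℝ) ≤ 1/2)]
    rw [ENNReal.ofReal_rpow_of_nonneg ?hnn (by norm_num : (0:ℝ) ≤ 1/2)]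
    case hnn =>
      have : (0:ℝ) ≤ R ^ (-(2*(n:ℝ))) := Real.rpow_nonneg hR.le _
      positivity
    rw [hRdef, endgame_real hn hIr0 hxpos]
    rw [ENNReal.ofReal_mul (by positivity),
      ENNReal.ofReal_mul (Real.rpow_nonneg (norm_nonneg x) (-(n:ℝ)))]
    rw [hK]
    ring
  have hKC : K ≤ ENNReal.ofReal (K.toReal + 1) := by
    conv_lhs => rw [← ENNReal.ofReal_toReal hKtop]
    exact ENNReal.ofReal_le_ofReal (by linarith [ENNReal.toReal_nonneg (a := K)])
  calc Sbeta β ((annulus l).indicator f) x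
      ≤ K * ENNReal.ofReal (‖x‖ ^ (-(n:ℝ))) * ENNReal.ofReal Ir := htot.trans (le_of_eq hB)
    _ ≤ ENNReal.ofReal (K.toReal + 1) * ENNReal.ofReal (‖x‖ ^ (-(n:ℝ)))
          * ENNReal.ofReal Ir := by
        exact mul_le_mul_left (mul_le_mul_left hKC _) _
    _ = ENNReal.ofReal (K.toReal + 1) * ENNReal.ofReal (‖x‖ ^ (-(n:ℝ))) *
          ∫⁻ z in annulus (n := n) l, (‖f z‖₊ : ℝ≥0∞) := by rw [hIrI]

end
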